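/- arXiv:1609.07358 — 2 statements merged into one kernel-verified Lean document; each statement's English description precedes it below -/
import Mathlib

section
/- Let α ∈ (0,1). For the FISTA iterates, if k is a natural number with k ≥ 2·(√((1+μ)/(α·μ)) − 1) + 1, then F(x_k) − F(x_*) ≤ α·(F(x_0) − F(x_*)). -/
open scoped RealInnerProductSpace
open Filter Topology

lemma convex_grad_ineq {n : ℕ} {f : EuclideanSpace ℝ (Fin n) → ℝ}
    {g y u : EuclideanSpace ℝ (Fin n)}
    (hconv : ConvexOn ℝ Set.univ f) (hg : HasGradientAt f g y) :
    f y + ⟪g, u - y⟫ ≤ f u := by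
  set φ : ℝ → ℝ := fun t => f (y + t • (u - y)) with hφ
  have hc : ∀ t : ℝ, HasDerivAt (fun s : ℝ => y + s • (u - y)) (u - y) t := by
    intro t
    simpa using ((hasDerivAt_id t).smul_const (u - y)).const_add y
  have hfd : HasFDerivAt f ((InnerProductSpace.toDual ℝ (EuclideanSpace ℝ (Fin n))) g)
      (y + (0:ℝ) • (u - y)) := by simpa using hg.hasFDerivAt
  have hD : HasDerivAt φ (⟪g, u - y⟫) 0 := by
    have := hfd.comp_hasDerivAt 0 (hc 0)
    simp at this
    exact this
  have hφ0 : φ 0 = f y := by simp [hφ]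
  have hslope : Filter.Tendsto (slope φ 0) (𝓝[>] 0) (𝓝 (⟪g, u - y⟫)) :=
    (hasDerivAt_iff_tendsto_slope.mp hD).mono_left
      (nhdsWithin_mono _ fun t ht => ne_of_gt ht)
  have hev : ∀ᶠ t in 𝓝[>] (0:ℝ), slope φ 0 t ≤ f u - f y := by
    filter_upwards [Ioo_mem_nhdsGT_of_mem (Set.left_mem_Ico.mpr one_pos)] with t ht
    have ht0 : (0:ℝ) < t := ht.1
    have hcomb : y + t • (u - y) = (1 - t) • y + t • u := by module
    have hcv : φ t ≤ (1 - t) * f y + t * f u := by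
      rw [hφ]; simp only; rw [hcomb]
      have := hconv.2 (Set.mem_univ y) (Set.mem_univ u)
        (by linarith [ht.2] : (0:ℝ) ≤ 1 - t) (le_of_lt ht0)
        (by ring : (1 - t) + t = 1)
      simpa using this
    rw [slope_def_field, sub_zero, div_le_iff₀ ht0]
    simp only [hφ0]
    nlinarith
  have := le_of_tendsto hslope hev
  linarith
open scoped RealInnerProductSpace

lemma strong_min {n : ℕ} (v : Fin n → ℝ) (hv : ∀ i, 0 ≤ v i)
    (ψ : EuclideanSpace ℝ (Fin n) → ℝ) (hψ : ConvexOn ℝ Set.univ ψ)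
    (b yy xp : EuclideanSpace ℝ (Fin n))
    (hmin : ∀ u, ⟪b, xp - yy⟫ + (1/2) * (∑ i, v i * ((xp - yy) i)^2) + ψ xp
      ≤ ⟪b, u - yy⟫ + (1/2) * (∑ i, v i * ((u - yy) i)^2) + ψ u) (u : EuclideanSpace ℝ (Fin n)) :
    ⟪b, xp - yy⟫ + (1/2) * (∑ i, v i * ((xp - yy) i)^2) + ψ xp
      + (1/2) * (∑ i, v i * ((u - xp) i)^2)
      ≤ ⟪b, u - yy⟫ + (1/2) * (∑ i, v i * ((u - yy) i)^2) + ψ u := by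
  set S := ∑ i, v i * ((u - xp) i)^2 with hS
  have hS0 : 0 ≤ S := Finset.sum_nonneg fun i _ => mul_nonneg (hv i) (sq_nonneg _)
  have main : ∀ l : ℝ, 0 < l → l ≤ 1 →
      ⟪b, xp - yy⟫ + (1/2) * (∑ i, v i * ((xp - yy) i)^2) + ψ xp + (1/2) * S
      ≤ ⟪b, u - yy⟫ + (1/2) * (∑ i, v i * ((u - yy) i)^2) + ψ u + (l/2) * S := by
    intro l hl0 hl1
    set m := l • u + (1 - l) • xp with hm
    have hmv : m - yy = l • (u - yy) + (1 - l) • (xp - yy) := by rw [hm]; module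
    have hinner : ⟪b, m - yy⟫ = l * ⟪b, u - yy⟫ + (1 - l) * ⟪b, xp - yy⟫ := by
      rw [hmv, inner_add_right, real_inner_smul_right, real_inner_smul_right]
    have hsum : (∑ i, v i * ((m - yy) i)^2)
        = l * (∑ i, v i * ((u - yy) i)^2) + (1 - l) * (∑ i, v i * ((xp - yy) i)^2)
          - l * (1 - l) * S := by
      rw [hS, Finset.mul_sum, Finset.mul_sum, Finset.mul_sum, ← Finset.sum_add_distrib,
        ← Finset.sum_sub_distrib]
      apply Finset.sum_congr rfl
      intro i _
      have h1 : (m - yy) i = l * ((u - yy) i) + (1 - l) * ((xp - yy) i) := by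
        rw [hmv]; simp [PiLp.add_apply, PiLp.smul_apply, smul_eq_mul]
      have h2 : (u - xp) i = (u - yy) i - (xp - yy) i := by
        simp [PiLp.sub_apply]
      rw [h1, h2]; ring
    have hψm : ψ m ≤ l * ψ u + (1 - l) * ψ xp := by
      have := hψ.2 (Set.mem_univ u) (Set.mem_univ xp) (le_of_lt hl0) (by linarith)
        (by ring : l + (1 - l) = 1)
      simpa [hm] using this
    have hQ := hmin m
    rw [hinner, hsum] at hQ
    have hmul : l * (⟪b, xp - yy⟫ + (1/2) * (∑ i, v i * ((xp - yy) i)^2) + ψ xp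
        + (1/2) * S - (⟪b, u - yy⟫ + (1/2) * (∑ i, v i * ((u - yy) i)^2) + ψ u
          + (l/2) * S)) ≤ 0 := by nlinarith
    nlinarith [mul_pos hl0 hl0]
  have hfin : ∀ ε : ℝ, 0 < ε →
      ⟪b, xp - yy⟫ + (1/2) * (∑ i, v i * ((xp - yy) i)^2) + ψ xp + (1/2) * S
      ≤ ⟪b, u - yy⟫ + (1/2) * (∑ i, v i * ((u - yy) i)^2) + ψ u + ε := by
    intro ε hε
    have hl0 : 0 < min 1 (ε / (S + 1)) := lt_min one_pos (div_pos hε (by linarith))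
    have := main _ hl0 (min_le_left _ _)
    have hls : (min 1 (ε / (S + 1)) / 2) * S ≤ ε := by
      have h1 : min 1 (ε / (S + 1)) ≤ ε / (S + 1) := min_le_right _ _
      have h2 : (min 1 (ε / (S + 1))) * S ≤ (ε / (S + 1)) * S :=
        mul_le_mul_of_nonneg_right h1 hS0
      have h3 : (ε / (S + 1)) * S ≤ ε := by
        rw [div_mul_eq_mul_div, div_le_iff₀ (by linarith : (0:ℝ) < S + 1)]
        nlinarith
      nlinarith
    linarith
  have := le_of_forall_pos_le_add (fun ε hε => hfin ε hε)
  linarith [this]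

lemma theta_step {t t' : ℝ} (ht : 0 < t)
    (h : t' = (Real.sqrt (t^4 + 4*t^2) - t^2)/2) : 0 < t' ∧ t'^2 = t^2 * (1 - t') := by
  set s := Real.sqrt (t^4 + 4*t^2) with hs
  have hs0 : 0 ≤ s := Real.sqrt_nonneg _
  have hs2 : s^2 = t^4 + 4*t^2 := Real.sq_sqrt (by positivity)
  have hst : t^2 < s := by nlinarith [sq_nonneg (s - t^2), sq_nonneg t, mul_pos ht ht]
  constructor
  · rw [h]; linarith
  · rw [h]; nlinarith

lemma theta_props (θ : ℕ → ℝ) (h0 : θ 0 = 1)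
    (hrec : ∀ k, θ (k+1) = (Real.sqrt ((θ k)^4 + 4*(θ k)^2) - (θ k)^2)/2) :
    ∀ k : ℕ, 0 < θ k ∧ θ k ≤ 2/((k:ℝ)+2) := by
  intro k
  induction k with
  | zero => refine ⟨by rw [h0]; norm_num, by rw [h0]; norm_num⟩
  | succ k ih =>
    obtain ⟨hpos, hbd⟩ := ih
    obtain ⟨hpos', hrel⟩ := theta_step hpos (hrec k)
    refine ⟨hpos', ?_⟩
    set K := (k:ℝ) with hK
    have hK0 : 0 ≤ K := Nat.cast_nonneg k
    have h1m : 0 ≤ 1 - θ (k+1) := by nlinarith [sq_nonneg (θ (k+1)), mul_pos hpos hpos]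
    have hKθ : (K+2) * θ k ≤ 2 := by
      rw [le_div_iff₀ (by linarith : (0:ℝ) < K + 2)] at hbd
      linarith [hbd]
    have hsq : (K+2)^2 * (θ (k+1))^2 ≤ 4 * (1 - θ (k+1)) := by
      have h2 : ((K+2) * θ k)^2 ≤ 4 := by nlinarith [mul_pos (by linarith : (0:ℝ) < K+2) hpos]
      nlinarith [mul_le_mul_of_nonneg_right h2 h1m]
    by_contra hcon
    push_neg at hcon
    have hgt : 2 < (K + 3) * θ (k+1) := by
      push_cast at hcon
      rw [div_lt_iff₀ (by linarith : (0:ℝ) < (k:ℝ) + 1 + 2)] at hcon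
      rw [hK]; linarith
    have hA : 4 < ((K+3) * θ (k+1))^2 := by nlinarith
    have hB : 8 * (K+3) < 4 * (K+3)^2 * θ (k+1) := by nlinarith [mul_lt_mul_of_pos_left hgt (by linarith : (0:ℝ) < 4*(K+3))]
    have hC : (K+3)^2 * ((K+2)^2 * (θ (k+1))^2 + 4 * θ (k+1) - 4) ≤ 0 := by nlinarith [sq_nonneg (K+3)]
    nlinarith [hA, hB, hC, sq_nonneg ((K+3)*(K+2)*θ (k+1))]

lemma sum_smul_sq {n : ℕ} (v : Fin n → ℝ) (c : ℝ) (w : EuclideanSpace ℝ (Fin n)) :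
    ∑ i, v i * ((c • w) i)^2 = c^2 * ∑ i, v i * (w i)^2 := by
  rw [Finset.mul_sum]
  apply Finset.sum_congr rfl
  intro i _
  simp [PiLp.smul_apply, smul_eq_mul]
  ring

lemma sum_sub_sq_comm {n : ℕ} (v : Fin n → ℝ) (a b : EuclideanSpace ℝ (Fin n)) :
    ∑ i, v i * ((a - b) i)^2 = ∑ i, v i * ((b - a) i)^2 := by
  apply Finset.sum_congr rfl
  intro i _
  simp only [PiLp.sub_apply]
  ring

set_option maxHeartbeats 1000000 in
theorem stmt_7 {n : ℕ} (hn : 1 ≤ n)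
    (v : Fin n → ℝ) (hv : ∀ i, 0 < v i)
    (f ψ F : EuclideanSpace ℝ (Fin n) → ℝ)
    (g : EuclideanSpace ℝ (Fin n) → EuclideanSpace ℝ (Fin n))
    (hfconv : ConvexOn ℝ Set.univ f)
    (hgrad : ∀ x, HasGradientAt f (g x) x)
    (hdesc : ∀ x h : EuclideanSpace ℝ (Fin n),
      f (x + h) ≤ f x + ⟪g x, h⟫ + (1 / 2) * ∑ i, v i * (h i) ^ 2)
    (hψconv : ConvexOn ℝ Set.univ ψ)
    (hF : ∀ x, F x = f x + ψ x)
    (xstar : EuclideanSpace ℝ (Fin n)) (hxstar : ∀ x, F xstar ≤ F x)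
    (x y z : ℕ → EuclideanSpace ℝ (Fin n)) (θ : ℕ → ℝ)
    (hθinit : θ 0 = 1) (hzinit : z 0 = x 0)
    (hy : ∀ k, y k = (1 - θ k) • x k + θ k • z k)
    (hxmin : ∀ k, ∀ u : EuclideanSpace ℝ (Fin n),
      ⟪g (y k), x (k + 1) - y k⟫ + (1 / 2) * (∑ i, v i * ((x (k + 1) - y k) i) ^ 2)
          + ψ (x (k + 1))
        ≤ ⟪g (y k), u - y k⟫ + (1 / 2) * (∑ i, v i * ((u - y k) i) ^ 2) + ψ u)
    (hz : ∀ k, z (k + 1) = z k + (θ k)⁻¹ • (x (k + 1) - y k))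
    (hθrec : ∀ k : ℕ, θ (k + 1) = (Real.sqrt ((θ k) ^ 4 + 4 * (θ k) ^ 2) - (θ k) ^ 2) / 2)
    (μ : ℝ) (hμ : 0 < μ)
    (hsc : ∀ u : EuclideanSpace ℝ (Fin n),
      F xstar + (μ / 2) * ∑ i, v i * ((u - xstar) i) ^ 2 ≤ F u)
    (α : ℝ) (hα0 : 0 < α) (hα1 : α < 1) :
    ∀ k : ℕ, (k : ℝ) ≥ 2 * (Real.sqrt ((1 + μ) / (α * μ)) - 1) + 1 →
      F (x k) - F xstar ≤ α * (F (x 0) - F xstar) := by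
  have hvle : ∀ i, 0 ≤ v i := fun i => (hv i).le
  have hθp := theta_props θ hθinit hθrec
  have hrel : ∀ k, (θ (k+1))^2 = (θ k)^2 * (1 - θ (k+1)) :=
    fun k => (theta_step (hθp k).1 (hθrec k)).2
  have hN0 : ∀ w : EuclideanSpace ℝ (Fin n), 0 ≤ ∑ i, v i * (w i)^2 :=
    fun w => Finset.sum_nonneg fun i _ => mul_nonneg (hvle i) (sq_nonneg _)
  -- per-step inequality with arbitrary u
  have hstep : ∀ k (u : EuclideanSpace ℝ (Fin n)),
      F (x (k+1)) ≤ F u + (1/2) * (∑ i, v i * ((u - y k) i)^2)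
        - (1/2) * (∑ i, v i * ((u - x (k+1)) i)^2) := by
    intro k u
    have h1 := strong_min v hvle ψ hψconv (g (y k)) (y k) (x (k+1)) (hxmin k) u
    have harg : y k + (x (k+1) - y k) = x (k+1) := by abel
    have h2 : f (x (k+1)) ≤ f (y k) + ⟪g (y k), x (k+1) - y k⟫
        + (1/2) * (∑ i, v i * ((x (k+1) - y k) i)^2) := by
      have := hdesc (y k) (x (k+1) - y k)
      rw [harg] at this
      linarith
    have h3 : f (y k) + ⟪g (y k), u - y k⟫ ≤ f u :=
      convex_grad_ineq hfconv (hgrad (y k))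
    rw [hF (x (k+1)), hF u]
    linarith
  -- per-step with the special point
  have hE : ∀ k, F (x (k+1)) - F xstar + ((θ k)^2/2) * (∑ i, v i * ((xstar - z (k+1)) i)^2)
      ≤ (1 - θ k) * (F (x k) - F xstar)
        + ((θ k)^2/2) * (∑ i, v i * ((xstar - z k) i)^2) := by
    intro k
    obtain ⟨hpos, hbd⟩ := hθp k
    set u : EuclideanSpace ℝ (Fin n) := (1 - θ k) • x k + θ k • xstar with hu
    have hθ1 : θ k ≤ 1 := by
      refine le_trans hbd ?_
      rw [div_le_one (by positivity)]
      have : (0:ℝ) ≤ (k:ℝ) := Nat.cast_nonneg k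
      linarith
    have hzz : θ k • z (k+1) = θ k • z k + (x (k+1) - y k) := by
      rw [hz k, smul_add, smul_smul, mul_inv_cancel₀ (ne_of_gt hpos), one_smul]
    have huy : u - y k = θ k • (xstar - z k) := by
      rw [hu, hy k]; module
    have hux : u - x (k+1) = θ k • (xstar - z (k+1)) := by
      rw [smul_sub, hzz, hu, hy k]; module
    have hFu : F u ≤ (1 - θ k) * F (x k) + θ k * F xstar := by
      have := (hfconv.add hψconv).2 (Set.mem_univ (x k)) (Set.mem_univ xstar)
        (by linarith) (le_of_lt hpos) (by ring : (1 - θ k) + θ k = 1)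
      simp only [smul_eq_mul] at this
      calc F u = f u + ψ u := hF u
        _ ≤ (1 - θ k) * (f (x k) + ψ (x k)) + θ k * (f xstar + ψ xstar) := this
        _ = (1 - θ k) * F (x k) + θ k * F xstar := by rw [hF (x k), hF xstar]
    have hu1 : (∑ i, v i * ((u - y k) i)^2)
        = (θ k)^2 * ∑ i, v i * ((xstar - z k) i)^2 := by rw [huy, sum_smul_sq]
    have hu2 : (∑ i, v i * ((u - x (k+1)) i)^2)
        = (θ k)^2 * ∑ i, v i * ((xstar - z (k+1)) i)^2 := by rw [hux, sum_smul_sq]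
    have := hstep k u
    rw [hu1, hu2] at this
    linarith
  -- telescoped bound
  have htel : ∀ k, F (x (k+1)) - F xstar
      + ((θ k)^2/2) * (∑ i, v i * ((xstar - z (k+1)) i)^2)
      ≤ ((θ k)^2/2) * (∑ i, v i * ((xstar - x 0) i)^2) := by
    intro k
    induction k with
    | zero =>
      have := hE 0
      rw [hθinit, hzinit] at this
      rw [hθinit]
      linarith
    | succ k ih =>
      have h1m : 0 ≤ 1 - θ (k+1) := by
        have h := hrel k
        nlinarith [sq_nonneg (θ (k+1)), (hθp k).1, mul_pos (hθp k).1 (hθp k).1]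
      have e1 := mul_le_mul_of_nonneg_left ih h1m
      have e2 := hE (k+1)
      have q1 : (1 - θ (k+1)) * ((θ k)^2/2 * (∑ i, v i * ((xstar - z (k+1)) i)^2))
          = (θ (k+1))^2/2 * (∑ i, v i * ((xstar - z (k+1)) i)^2) := by
        linear_combination (-(∑ i, v i * ((xstar - z (k+1)) i)^2)/2) * (hrel k)
      have q2 : (1 - θ (k+1)) * ((θ k)^2/2 * (∑ i, v i * ((xstar - x 0) i)^2))
          = (θ (k+1))^2/2 * (∑ i, v i * ((xstar - x 0) i)^2) := by
        linear_combination (-(∑ i, v i * ((xstar - x 0) i)^2)/2) * (hrel k)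
      have e1' : (1 - θ (k+1)) * (F (x (k+1)) - F xstar)
          + (θ (k+1))^2/2 * (∑ i, v i * ((xstar - z (k+1)) i)^2)
          ≤ (θ (k+1))^2/2 * (∑ i, v i * ((xstar - x 0) i)^2) := by
        rw [mul_add] at e1
        linarith [e1, q1.symm, q2.symm]
      linarith [e1', e2]
  -- conclusion
  intro k hk
  set R := (1 + μ) / (α * μ) with hR
  have hαμ : 0 < α * μ := mul_pos hα0 hμ
  have hR1 : 1 ≤ R := by
    rw [hR, le_div_iff₀ hαμ]
    nlinarith
  have hsR : 1 ≤ Real.sqrt R := by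
    rw [show (1:ℝ) = Real.sqrt 1 by simp]
    exact Real.sqrt_le_sqrt hR1
  have hk1 : (1:ℝ) ≤ (k:ℝ) := by linarith
  have hkge : 1 ≤ k := by exact_mod_cast hk1
  obtain ⟨m, rfl⟩ : ∃ m, k = m + 1 := ⟨k - 1, (Nat.succ_pred_eq_of_pos hkge).symm⟩
  obtain ⟨hpos, hbd⟩ := hθp m
  have hδ0 : 0 ≤ F (x 0) - F xstar := by linarith [hxstar (x 0)]
  have hhalf : (1/2) * (∑ i, v i * ((xstar - x 0) i)^2) ≤ (F (x 0) - F xstar) / μ := by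
    have h := hsc (x 0)
    rw [sum_sub_sq_comm]
    rw [le_div_iff₀ hμ]
    nlinarith
  have hbound := htel m
  have hdrop : F (x (m+1)) - F xstar ≤ ((θ m)^2/2) * (∑ i, v i * ((xstar - x 0) i)^2) := by
    have h4 := hN0 (xstar - z (m+1))
    nlinarith [mul_nonneg (sq_nonneg (θ m)) h4]
  -- (θ m)^2 ≤ α * μ
  have hksq : ((m:ℝ) + 2)^2 ≥ 4 * R := by
    have h2 : ((m:ℝ) + 1 + 1) ≥ 2 * Real.sqrt R := by push_cast at hk ⊢; linarith
    have hs0 : 0 ≤ Real.sqrt R := Real.sqrt_nonneg _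
    nlinarith [Real.sq_sqrt (by positivity : (0:ℝ) ≤ R)]
  have hθsq : (θ m)^2 ≤ α * μ := by
    have hm2 : (0:ℝ) < (m:ℝ) + 2 := by positivity
    have h1 : (θ m)^2 ≤ (2/((m:ℝ)+2))^2 := by nlinarith
    have h2 : (2/((m:ℝ)+2))^2 ≤ α * μ := by
      rw [div_pow, div_le_iff₀ (by positivity)]
      have h3 : 4 * R * (α * μ) = 4 * (1 + μ) := by
        rw [hR]; field_simp
      nlinarith [sq_nonneg ((m:ℝ)+2)]
    linarith
  calc F (x (m+1)) - F xstar
      ≤ ((θ m)^2/2) * (∑ i, v i * ((xstar - x 0) i)^2) := hdrop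
    _ ≤ (α * μ) * ((F (x 0) - F xstar) / μ) := by
        have := mul_le_mul hθsq hhalf (by have := hN0 (xstar - x 0); linarith) (le_of_lt hαμ)
        calc ((θ m)^2/2) * (∑ i, v i * ((xstar - x 0) i)^2)
            = (θ m)^2 * ((1/2) * (∑ i, v i * ((xstar - x 0) i)^2)) := by ring
          _ ≤ (α * μ) * ((F (x 0) - F xstar) / μ) := this
    _ = α * (F (x 0) - F xstar) := by field_simp
end

section
/- For the FISTA iterates, let k ≥ 1 and suppose F(z_k) ≤ F(x_k). Then (1/2)·‖z_k − x_*‖_v² ≤ (1/(1 + μ/θ_{k−1}²))·(1/2)·‖z_0 − x_*‖_v². -/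
open scoped RealInnerProductSpace Topology
open Filter

section Helpers
variable {n : ℕ}

lemma Nv_nonneg (v : Fin n → ℝ) (hv : ∀ i, 0 < v i) (a : EuclideanSpace ℝ (Fin n)) :
    0 ≤ ∑ i, v i * (a i) ^ 2 :=
  Finset.sum_nonneg fun i _ => mul_nonneg (hv i).le (sq_nonneg _)

lemma Nv_expand (v : Fin n → ℝ) (a b : EuclideanSpace ℝ (Fin n)) (t : ℝ) :
    ∑ i, v i * ((a + t • b) i) ^ 2
      = ∑ i, v i * (a i) ^ 2 + 2 * t * (∑ i, v i * (a i * b i)) + t ^ 2 * ∑ i, v i * (b i) ^ 2 := by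
  simp only [PiLp.add_apply, PiLp.smul_apply, smul_eq_mul, Finset.mul_sum,
    ← Finset.sum_add_distrib]
  exact Finset.sum_congr rfl fun i _ => by ring

lemma Nv_smul (v : Fin n → ℝ) (t : ℝ) (a : EuclideanSpace ℝ (Fin n)) :
    ∑ i, v i * ((t • a) i) ^ 2 = t ^ 2 * ∑ i, v i * (a i) ^ 2 := by
  simp only [PiLp.smul_apply, smul_eq_mul, Finset.mul_sum]
  exact Finset.sum_congr rfl fun i _ => by ring

lemma Nv_comm (v : Fin n → ℝ) (a b : EuclideanSpace ℝ (Fin n)) :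
    ∑ i, v i * ((a - b) i) ^ 2 = ∑ i, v i * ((b - a) i) ^ 2 := by
  simp only [PiLp.sub_apply]
  exact Finset.sum_congr rfl fun i _ => by ring

lemma grad_ineq {f : EuclideanSpace ℝ (Fin n) → ℝ} (hf : ConvexOn ℝ Set.univ f)
    {x gx : EuclideanSpace ℝ (Fin n)} (hg : HasGradientAt f gx x)
    (p : EuclideanSpace ℝ (Fin n)) : f x + ⟪gx, p - x⟫ ≤ f p := by
  have hc : HasDerivAt (fun t : ℝ => x + t • (p - x)) (p - x) 0 := by
    simpa using ((hasDerivAt_id (0:ℝ)).smul_const (p - x)).const_add x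
  have hφ : HasDerivAt (fun t : ℝ => f (x + t • (p - x))) ⟪gx, p - x⟫ 0 := by
    have h0 : HasFDerivAt f ((InnerProductSpace.toDual ℝ _) gx) (x + (0:ℝ) • (p - x)) := by
      simpa using hg.hasFDerivAt
    have := h0.comp_hasDerivAt (0:ℝ) hc
    exact this
  set φ : ℝ → ℝ := fun t : ℝ => f (x + t • (p - x)) with hφdef
  have hslope : Filter.Tendsto (slope φ 0) (𝓝[>] 0) (𝓝 ⟪gx, p - x⟫) :=
    (hasDerivAt_iff_tendsto_slope.1 hφ).mono_left
      (nhdsWithin_mono _ fun t ht => ne_of_gt ht)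
  have hle : ∀ᶠ t in 𝓝[>] (0:ℝ), slope φ 0 t ≤ f p - f x := by
    filter_upwards [Ioc_mem_nhdsGT_of_mem (Set.mem_Ico.2 ⟨le_refl (0:ℝ), one_pos⟩)]
      with t ht
    obtain ⟨ht0, ht1⟩ := ht
    have hcvx := hf.2 (Set.mem_univ x) (Set.mem_univ p) (by linarith : (0:ℝ) ≤ 1 - t)
      ht0.le (by ring)
    have hpt : (1 - t) • x + t • p = x + t • (p - x) := by module
    rw [hpt] at hcvx
    have : φ t - φ 0 ≤ t * (f p - f x) := by
      simp only [hφdef, zero_smul, add_zero, smul_eq_mul] at hcvx ⊢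
      nlinarith
    rw [slope_def_field]
    simp only [div_eq_iff, sub_zero] at *
    rw [div_le_iff₀ ht0]
    linarith [this]
  linarith [le_of_tendsto hslope hle]

lemma prox_strong (v : Fin n → ℝ) (hv : ∀ i, 0 < v i)
    {ψ : EuclideanSpace ℝ (Fin n) → ℝ} (hψ : ConvexOn ℝ Set.univ ψ)
    (gy yk w : EuclideanSpace ℝ (Fin n))
    (hmin : ∀ u, ⟪gy, w - yk⟫ + (1 / 2) * (∑ i, v i * ((w - yk) i) ^ 2) + ψ w
      ≤ ⟪gy, u - yk⟫ + (1 / 2) * (∑ i, v i * ((u - yk) i) ^ 2) + ψ u)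
    (u : EuclideanSpace ℝ (Fin n)) :
    ψ w ≤ ψ u + ⟪gy, u - w⟫ + ∑ i, v i * ((w - yk) i * ((u - w) i)) := by
  set N : ℝ := ∑ i, v i * ((u - w) i) ^ 2 with hNdef
  set D : ℝ := ∑ i, v i * ((w - yk) i * ((u - w) i)) with hDdef
  set A : ℝ := ψ u + ⟪gy, u - w⟫ + D - ψ w with hAdef
  have ht : ∀ t : ℝ, 0 < t → t ≤ 1 → 0 ≤ A + (t / 2) * N := by
    intro t ht0 ht1
    have hmem := hψ.2 (Set.mem_univ w) (Set.mem_univ u) (by linarith : (0:ℝ) ≤ 1 - t)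
      ht0.le (by ring)
    have hut : ((1 - t) • w + t • u) - yk = (w - yk) + t • (u - w) := by module
    have h := hmin ((1 - t) • w + t • u)
    rw [hut, Nv_expand v (w - yk) (u - w) t, inner_add_right, real_inner_smul_right] at h
    rw [← hNdef, ← hDdef] at h
    simp only [smul_eq_mul] at hmem
    have h2 : 0 ≤ t * (A + (t / 2) * N) := by rw [hAdef]; nlinarith [h, hmem]
    have := le_of_mul_le_mul_left (by linarith : t * 0 ≤ t * (A + (t / 2) * N)) ht0
    linarith
  by_contra hA
  push_neg at hA
  have hApos : A < 0 := by rw [hAdef]; linarith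
  have hN : 0 ≤ N := Nv_nonneg v hv _
  set t : ℝ := min 1 (-A / (N + 1)) with htdef
  have ht0 : 0 < t := lt_min one_pos (div_pos (by linarith) (by linarith))
  have hmain := ht t ht0 (min_le_left _ _)
  have htle : t * (N + 1) ≤ -A := by
    rw [← le_div_iff₀ (by positivity : (0:ℝ) < N + 1)]
    exact min_le_right _ _
  nlinarith [hmain, htle, mul_nonneg ht0.le hN, ht0]

end Helpers

theorem stmt_8 {n : ℕ} (hn : 1 ≤ n)
    (v : Fin n → ℝ) (hv : ∀ i, 0 < v i)
    (f ψ F : EuclideanSpace ℝ (Fin n) → ℝ)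
    (g : EuclideanSpace ℝ (Fin n) → EuclideanSpace ℝ (Fin n))
    (hfconv : ConvexOn ℝ Set.univ f)
    (hgrad : ∀ x, HasGradientAt f (g x) x)
    (hdesc : ∀ x h : EuclideanSpace ℝ (Fin n),
      f (x + h) ≤ f x + ⟪g x, h⟫ + (1 / 2) * ∑ i, v i * (h i) ^ 2)
    (hψconv : ConvexOn ℝ Set.univ ψ)
    (hF : ∀ x, F x = f x + ψ x)
    (xstar : EuclideanSpace ℝ (Fin n)) (hxstar : ∀ x, F xstar ≤ F x)
    (x y z : ℕ → EuclideanSpace ℝ (Fin n)) (θ : ℕ → ℝ)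
    (hθinit : θ 0 = 1) (hzinit : z 0 = x 0)
    (hy : ∀ k, y k = (1 - θ k) • x k + θ k • z k)
    (hxmin : ∀ k, ∀ u : EuclideanSpace ℝ (Fin n),
      ⟪g (y k), x (k + 1) - y k⟫ + (1 / 2) * (∑ i, v i * ((x (k + 1) - y k) i) ^ 2)
          + ψ (x (k + 1))
        ≤ ⟪g (y k), u - y k⟫ + (1 / 2) * (∑ i, v i * ((u - y k) i) ^ 2) + ψ u)
    (hz : ∀ k, z (k + 1) = z k + (θ k)⁻¹ • (x (k + 1) - y k))
    (hθrec : ∀ k : ℕ, θ (k + 1) = (Real.sqrt ((θ k) ^ 4 + 4 * (θ k) ^ 2) - (θ k) ^ 2) / 2)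
    (μ : ℝ) (hμ : 0 < μ)
    (hsc : ∀ u : EuclideanSpace ℝ (Fin n),
      F xstar + (μ / 2) * ∑ i, v i * ((u - xstar) i) ^ 2 ≤ F u) :
    ∀ k : ℕ, 1 ≤ k → F (z k) ≤ F (x k) →
      (1 / 2) * ∑ i, v i * ((z k - xstar) i) ^ 2
        ≤ (1 / (1 + μ / (θ (k - 1)) ^ 2)) * ((1 / 2) * ∑ i, v i * ((z 0 - xstar) i) ^ 2) := by
  -- θ basic facts
  have hθpos : ∀ k, 0 < θ k ∧ θ k ≤ 1 := by
    intro k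
    induction k with
    | zero => rw [hθinit]; exact ⟨one_pos, le_refl 1⟩
    | succ k ih =>
      obtain ⟨h0, h1⟩ := ih
      have hnn : (0:ℝ) ≤ θ k ^ 4 + 4 * θ k ^ 2 := by positivity
      have hs : Real.sqrt (θ k ^ 4 + 4 * θ k ^ 2) ^ 2 = θ k ^ 4 + 4 * θ k ^ 2 :=
        Real.sq_sqrt hnn
      have hsnn := Real.sqrt_nonneg (θ k ^ 4 + 4 * θ k ^ 2)
      have hsgt : θ k ^ 2 < Real.sqrt (θ k ^ 4 + 4 * θ k ^ 2) := by
        nlinarith [pow_pos h0 2, sq_nonneg (θ k)]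
      have hpos : 0 < θ (k + 1) := by rw [hθrec k]; linarith
      have hrel : θ (k + 1) ^ 2 = θ k ^ 2 * (1 - θ (k + 1)) := by
        rw [hθrec k]; linear_combination hs / 4
      refine ⟨hpos, ?_⟩
      by_contra hgt
      push_neg at hgt
      have hle0 : θ k ^ 2 * (1 - θ (k + 1)) ≤ 0 :=
        mul_nonpos_of_nonneg_of_nonpos (by positivity) (by linarith)
      nlinarith [pow_pos hpos 2]
  have hθrel : ∀ k, θ (k + 1) ^ 2 = θ k ^ 2 * (1 - θ (k + 1)) := by
    intro k
    have hnn : (0:ℝ) ≤ θ k ^ 4 + 4 * θ k ^ 2 := by positivity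
    have hs : Real.sqrt (θ k ^ 4 + 4 * θ k ^ 2) ^ 2 = θ k ^ 4 + 4 * θ k ^ 2 :=
      Real.sq_sqrt hnn
    rw [hθrec k]; linear_combination hs / 4
  -- the one-step inequality
  have step : ∀ k : ℕ,
      F (x (k + 1)) - F xstar
          + θ k ^ 2 * ((1 / 2) * ∑ i, v i * ((z (k + 1) - xstar) i) ^ 2)
        ≤ (1 - θ k) * (F (x k) - F xstar)
          + θ k ^ 2 * ((1 / 2) * ∑ i, v i * ((z k - xstar) i) ^ 2) := by
    intro k
    obtain ⟨hth0, hth1⟩ := hθpos k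
    set u : EuclideanSpace ℝ (Fin n) := (1 - θ k) • x k + θ k • xstar with hudef
    have huy : u - y k = θ k • (xstar - z k) := by rw [hy k]; module
    have hwy : x (k + 1) - y k = θ k • (z (k + 1) - z k) := by
      have h1 : z (k + 1) - z k = (θ k)⁻¹ • (x (k + 1) - y k) := by rw [hz k]; abel
      rw [h1, smul_smul, mul_inv_cancel₀ (ne_of_gt hth0), one_smul]
    have huw : u - x (k + 1) = θ k • (xstar - z (k + 1)) := by
      have h1 : u - x (k + 1) = (u - y k) - (x (k + 1) - y k) := by abel
      rw [h1, huy, hwy]; module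
    have hd := hdesc (y k) (x (k + 1) - y k)
    rw [show y k + (x (k + 1) - y k) = x (k + 1) by abel] at hd
    have hps := prox_strong v hv hψconv (g (y k)) (y k) (x (k + 1)) (hxmin k) u
    have hexp : ∑ i, v i * ((u - y k) i) ^ 2
        = ∑ i, v i * ((x (k + 1) - y k) i) ^ 2
          + 2 * 1 * (∑ i, v i * ((x (k + 1) - y k) i * ((u - x (k + 1)) i)))
          + 1 ^ 2 * ∑ i, v i * ((u - x (k + 1)) i) ^ 2 := by
      rw [show u - y k = (x (k + 1) - y k) + (1:ℝ) • (u - x (k + 1)) by module]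
      exact Nv_expand v _ _ 1
    have hinner : ⟪g (y k), u - y k⟫
        = ⟪g (y k), x (k + 1) - y k⟫ + ⟪g (y k), u - x (k + 1)⟫ := by
      rw [← inner_add_right]
      congr 1
      abel
    have hsplit2 : ⟪g (y k), u - y k⟫
        = (1 - θ k) * ⟪g (y k), x k - y k⟫ + θ k * ⟪g (y k), xstar - y k⟫ := by
      rw [show u - y k = (1 - θ k) • (x k - y k) + θ k • (xstar - y k) by rw [hudef]; module,
        inner_add_right, real_inner_smul_right, real_inner_smul_right]
    have hg1 := grad_ineq hfconv (hgrad (y k)) (x k)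
    have hg2 := grad_ineq hfconv (hgrad (y k)) xstar
    have hg1' : (1 - θ k) * (f (y k) + ⟪g (y k), x k - y k⟫) ≤ (1 - θ k) * f (x k) :=
      mul_le_mul_of_nonneg_left hg1 (by linarith)
    have hg2' : θ k * (f (y k) + ⟪g (y k), xstar - y k⟫) ≤ θ k * f xstar :=
      mul_le_mul_of_nonneg_left hg2 hth0.le
    have hψu : ψ u ≤ (1 - θ k) * ψ (x k) + θ k * ψ xstar := by
      have := hψconv.2 (Set.mem_univ (x k)) (Set.mem_univ xstar)
        (by linarith : (0:ℝ) ≤ 1 - θ k) hth0.le (by ring)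
      simpa [smul_eq_mul, ← hudef] using this
    have hNuy : ∑ i, v i * ((u - y k) i) ^ 2
        = θ k ^ 2 * ∑ i, v i * ((z k - xstar) i) ^ 2 := by
      rw [huy, Nv_smul, Nv_comm]
    have hNuw : ∑ i, v i * ((u - x (k + 1)) i) ^ 2
        = θ k ^ 2 * ∑ i, v i * ((z (k + 1) - xstar) i) ^ 2 := by
      rw [huw, Nv_smul, Nv_comm]
    have hFx1 := hF (x (k + 1))
    have hFxk := hF (x k)
    have hFs := hF xstar
    have hcomb1 : F (x (k + 1)) ≤ f (y k) + ⟪g (y k), u - y k⟫ + ψ u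
        + (1 / 2) * ∑ i, v i * ((u - y k) i) ^ 2
        - (1 / 2) * ∑ i, v i * ((u - x (k + 1)) i) ^ 2 := by
      linarith [hd, hps, hinner, hexp, hFx1]
    have hcomb2 : f (y k) + ⟪g (y k), u - y k⟫ ≤ (1 - θ k) * f (x k) + θ k * f xstar := by
      linarith [hsplit2, hg1', hg2']
    rw [hFx1] at hcomb1
    rw [hFx1, hFxk, hFs]
    linarith [hcomb1, hcomb2, hψu, hNuy, hNuw]
  -- the telescoped estimate
  have key : ∀ k : ℕ,
      (1 / θ k ^ 2) * (F (x (k + 1)) - F xstar)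
          + (1 / 2) * ∑ i, v i * ((z (k + 1) - xstar) i) ^ 2
        ≤ (1 / 2) * ∑ i, v i * ((z 0 - xstar) i) ^ 2 := by
    intro k
    induction k with
    | zero =>
      have h := step 0
      rw [hθinit] at h ⊢
      norm_num at h ⊢
      linarith
    | succ k ih =>
      obtain ⟨h0, h1⟩ := hθpos k
      obtain ⟨h0', h1'⟩ := hθpos (k + 1)
      have hq : (0:ℝ) < θ k ^ 2 := pow_pos h0 2
      have hp : (0:ℝ) < θ (k + 1) ^ 2 := pow_pos h0' 2
      have hco : (1 - θ (k + 1)) * (F (x (k + 1)) - F xstar)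
          = θ (k + 1) ^ 2 * ((1 / θ k ^ 2) * (F (x (k + 1)) - F xstar)) := by
        rw [eq_comm, mul_comm (θ (k+1)^2), mul_assoc, one_div, inv_mul_eq_div,
          div_eq_iff (ne_of_gt hq)]
        linear_combination (F (x (k + 1)) - F xstar) * (hθrel k)
      have hstep := step (k + 1)
      rw [hco] at hstep
      have hihm := mul_le_mul_of_nonneg_left ih hp.le
      have hgoal' : F (x (k + 2)) - F xstar
          + θ (k + 1) ^ 2 * ((1 / 2) * ∑ i, v i * ((z (k + 2) - xstar) i) ^ 2)
          ≤ θ (k + 1) ^ 2 * ((1 / 2) * ∑ i, v i * ((z 0 - xstar) i) ^ 2) := by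
        linarith [hstep, hihm]
      have hmul : θ (k + 1) ^ 2 * ((1 / θ (k + 1) ^ 2) * (F (x (k + 2)) - F xstar)
            + (1 / 2) * ∑ i, v i * ((z (k + 2) - xstar) i) ^ 2)
          ≤ θ (k + 1) ^ 2 * ((1 / 2) * ∑ i, v i * ((z 0 - xstar) i) ^ 2) := by
        rw [mul_add, ← mul_assoc, mul_one_div_cancel (ne_of_gt hp), one_mul]
        exact hgoal'
      exact le_of_mul_le_mul_left hmul hp
  -- conclusion
  intro k hk hFz
  obtain ⟨j, rfl⟩ : ∃ j, k = j + 1 := ⟨k - 1, (Nat.succ_pred_eq_of_pos hk).symm⟩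
  simp only [Nat.add_sub_cancel]
  obtain ⟨h0, h1⟩ := hθpos j
  have hq : (0:ℝ) < θ j ^ 2 := pow_pos h0 2
  have hc : (0:ℝ) < 1 + μ / θ j ^ 2 := by positivity
  have hkey := key j
  have hm : (1 / θ j ^ 2) * ((μ / 2) * ∑ i, v i * ((z (j + 1) - xstar) i) ^ 2)
      ≤ (1 / θ j ^ 2) * (F (x (j + 1)) - F xstar) := by
    apply mul_le_mul_of_nonneg_left _ (by positivity)
    linarith [hsc (z (j + 1)), hFz]
  rw [show (1 / (1 + μ / θ j ^ 2)) * ((1 / 2) * ∑ i, v i * ((z 0 - xstar) i) ^ 2)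
      = ((1 / 2) * ∑ i, v i * ((z 0 - xstar) i) ^ 2) / (1 + μ / θ j ^ 2) by ring,
    le_div_iff₀ hc]
  have hNk := Nv_nonneg v hv (z (j + 1) - xstar)
  have e1 : (1 / 2 * ∑ i, v i * ((z (j + 1) - xstar) i) ^ 2) * (1 + μ / θ j ^ 2)
      = 1 / 2 * ∑ i, v i * ((z (j + 1) - xstar) i) ^ 2
        + 1 / θ j ^ 2 * (μ / 2 * ∑ i, v i * ((z (j + 1) - xstar) i) ^ 2) := by
    field_simp
  linarith [hkey, hm, e1]
end
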